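/- Let A be an associative unital ℚ-algebra with a central element t such that A is t-adically separated and t-adically complete. Let q ∈ A satisfy q·q − q ∈ tA. Then the element Q := 1/2 + (q − 1/2)·S, where S is the unique element of A with S − 1 ∈ tA, S·x = x·S, and S·S·(1 + x) = 1 for x := 4·(q·q − q), is a well-defined idempotent: Q·Q = Q, Q − q ∈ tA, and Q·q = q·Q. -/

import Mathlib

open Polynomial

namespace FedoAux

lemma key1 {R : Type*} [CommRing R] (c s x : R) (hc : 2 * c = 1) :
    (c * (3 * s - s ^ 3 * (1 + x))) ^ 2 * (1 + x) - 1
      = (c * c) * ((s ^ 2 * (1 + x) - 1) ^ 2 * ((s ^ 2 * (1 + x) - 1) - 3)) := by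
  linear_combination (2 * c + 1) * hc

lemma key2 {R : Type*} [CommRing R] (c s x : R) (hc : 2 * c = 1) :
    c * (3 * s - s ^ 3 * (1 + x)) - s = -(c * (s * (s ^ 2 * (1 + x) - 1))) := by
  linear_combination s * hc

noncomputable def P : ℕ → ℚ[X]
  | 0 => 1
  | n+1 => C (1/2 : ℚ) * (3 * P n - (P n) ^ 3 * (1 + 4 * (X ^ 2 - X)))

noncomputable def E (n : ℕ) : ℚ[X] := (P n) ^ 2 * (1 + 4 * (X ^ 2 - X)) - 1

lemma hchalf : 2 * C (1/2 : ℚ) = 1 := by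
  have : (2 : ℚ[X]) = C 2 := (map_ofNat C 2).symm
  rw [this, ← C_mul]
  norm_num

lemma E_succ (n : ℕ) : E (n+1) = C (1/4 : ℚ) * ((E n) ^ 2 * (E n - 3)) := by
  have h := key1 (C (1/2:ℚ)) (P n) (4*(X^2 - X)) hchalf
  have h14 : C (1/2:ℚ) * C (1/2:ℚ) = C (1/4:ℚ) := by rw [← C_mul]; norm_num
  rw [h14] at h
  rw [E, E, P]
  exact h

lemma P_diff (n : ℕ) : P (n+1) - P n = -(C (1/2:ℚ) * (P n * E n)) := by
  have h := key2 (C (1/2:ℚ)) (P n) (4*(X^2-X)) hchalf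
  rw [E, P]
  exact h

variable {A : Type*} [Ring A] [Algebra ℚ A] (q : A)

noncomputable def sig (n : ℕ) : A := aeval q (P n)

noncomputable def eI (n : ℕ) : A := aeval q (E n)

lemma aeval_comm (P₁ P₂ : ℚ[X]) : aeval q P₁ * aeval q P₂ = aeval q P₂ * aeval q P₁ := by
  rw [← map_mul, mul_comm, map_mul]

lemma sig_zero : sig q 0 = 1 := by simp [sig, P]

lemma sig_comm_q (n : ℕ) : sig q n * q = q * sig q n := by
  simpa [sig] using aeval_comm q (P n) X

lemma aeval_x : aeval q (4 * (X ^ 2 - X) : ℚ[X]) = 4 * (q * q - q) := by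
  simp [pow_two, map_ofNat]

lemma sig_comm_x (n : ℕ) : sig q n * (4 * (q * q - q)) = (4 * (q * q - q)) * sig q n := by
  have h := aeval_comm q (P n) (4 * (X ^ 2 - X))
  rwa [aeval_x] at h

lemma eI_zero : eI q 0 = 4 * (q * q - q) := by
  have h : (E 0 : ℚ[X]) = 4 * (X ^ 2 - X) := by rw [E, P]; ring
  rw [eI, h, aeval_x]

lemma eI_succ (n : ℕ) :
    eI q (n + 1) = algebraMap ℚ A (1/4) * ((eI q n) ^ 2 * (eI q n - 3)) := by
  have h := congrArg (aeval q) (E_succ n)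
  simpa [eI, map_ofNat] using h

lemma eI_spec (n : ℕ) :
    eI q n = sig q n * sig q n * (1 + 4 * (q * q - q)) - 1 := by
  have h : eI q n = (sig q n) ^ 2 * (aeval q (1 + 4 * (X ^ 2 - X) : ℚ[X])) - 1 := by
    simp [eI, E, sig]
  rw [h, pow_two]
  simp [pow_two, map_ofNat]

lemma sig_diff (n : ℕ) :
    sig q (n + 1) - sig q n = -(algebraMap ℚ A (1/2) * (sig q n * eI q n)) := by
  have h := congrArg (aeval q) (P_diff n)
  simpa [sig, eI] using h

end FedoAux


/-- Fedosov's idempotent-lifting formula: if `q * q - q ∈ tA` then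
`Q = 1/2 + (q - 1/2) * (1 + 4(q*q - q))^{-1/2}` is a well-defined idempotent
congruent to `q` modulo `t` and commuting with `q`. -/
theorem idempotent_lift_formula
    (A : Type*) [Ring A] [Algebra ℚ A] (t : A)
    (hcentral : ∀ a : A, t * a = a * t)
    (hsep : ∀ a : A, (∀ n : ℕ, ∃ b : A, a = t ^ n * b) → a = 0)
    (hcomplete : ∀ s : ℕ → A,
      (∀ n : ℕ, ∃ b : A, s (n + 1) - s n = t ^ n * b) →
      ∃ a : A, ∀ n : ℕ, ∃ b : A, a - s n = t ^ n * b)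
    (q : A) (hq : ∃ b : A, q * q - q = t * b) :
    (∃! S : A,
        (∃ b : A, S - 1 = t * b) ∧
        S * (4 * (q * q - q)) = (4 * (q * q - q)) * S ∧
        S * S * (1 + 4 * (q * q - q)) = 1) ∧
    (∀ S : A,
        ((∃ b : A, S - 1 = t * b) ∧
          S * (4 * (q * q - q)) = (4 * (q * q - q)) * S ∧
          S * S * (1 + 4 * (q * q - q)) = 1) →
        (algebraMap ℚ A (1/2) + (q - algebraMap ℚ A (1/2)) * S) *
            (algebraMap ℚ A (1/2) + (q - algebraMap ℚ A (1/2)) * S) =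
          algebraMap ℚ A (1/2) + (q - algebraMap ℚ A (1/2)) * S ∧
        (∃ b : A, (algebraMap ℚ A (1/2) + (q - algebraMap ℚ A (1/2)) * S) - q = t * b) ∧
        (algebraMap ℚ A (1/2) + (q - algebraMap ℚ A (1/2)) * S) * q =
          q * (algebraMap ℚ A (1/2) + (q - algebraMap ℚ A (1/2)) * S)) := by
  classical
  obtain ⟨b₀, hb₀⟩ := hq
  -- powers of t are central
  have htc : ∀ (n : ℕ) (a : A), t ^ n * a = a * t ^ n := by
    intro n a
    induction n with
    | zero => simp
    | succ k ih => rw [pow_succ, mul_assoc, hcentral a, ← mul_assoc, ih, mul_assoc]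
  -- membership helpers
  have Mml : ∀ (n : ℕ) (r a : A), (∃ b, a = t ^ n * b) → ∃ b, r * a = t ^ n * b := by
    rintro n r a ⟨b, rfl⟩
    exact ⟨r * b, by rw [← mul_assoc, ← htc n r, mul_assoc]⟩
  have Mmr : ∀ (n : ℕ) (a r : A), (∃ b, a = t ^ n * b) → ∃ b, a * r = t ^ n * b := by
    rintro n a r ⟨b, rfl⟩
    exact ⟨b * r, by rw [mul_assoc]⟩
  have Madd : ∀ (n : ℕ) (a a' : A), (∃ b, a = t ^ n * b) → (∃ b, a' = t ^ n * b) →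
      ∃ b, a + a' = t ^ n * b := by
    rintro n a a' ⟨b, rfl⟩ ⟨b', rfl⟩
    exact ⟨b + b', by rw [mul_add]⟩
  have Mneg : ∀ (n : ℕ) (a : A), (∃ b, a = t ^ n * b) → ∃ b, -a = t ^ n * b := by
    rintro n a ⟨b, rfl⟩
    exact ⟨-b, by rw [mul_neg]⟩
  have Msub : ∀ (n : ℕ) (a a' : A), (∃ b, a = t ^ n * b) → (∃ b, a' = t ^ n * b) →
      ∃ b, a - a' = t ^ n * b := by
    intro n a a' h h'
    have := Madd n a (-a') h (Mneg n a' h')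
    simpa [sub_eq_add_neg] using this
  have Mmul : ∀ (m n : ℕ) (a a' : A), (∃ b, a = t ^ m * b) → (∃ b, a' = t ^ n * b) →
      ∃ b, a * a' = t ^ (m + n) * b := by
    rintro m n a a' ⟨u, rfl⟩ ⟨v, rfl⟩
    refine ⟨u * v, ?_⟩
    calc t ^ m * u * (t ^ n * v) = t ^ m * (u * (t ^ n * v)) := by rw [mul_assoc]
      _ = t ^ m * (t ^ n * (u * v)) := by rw [← mul_assoc u, ← htc n u, mul_assoc]
      _ = t ^ (m + n) * (u * v) := by rw [← mul_assoc, ← pow_add]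
  have Mmono : ∀ (m n : ℕ), m ≤ n → ∀ a : A, (∃ b, a = t ^ n * b) → ∃ b, a = t ^ m * b := by
    rintro m n hmn a ⟨b, rfl⟩
    exact ⟨t ^ (n - m) * b, by rw [← mul_assoc, ← pow_add, Nat.add_sub_cancel' hmn]⟩
  -- the swap lemma
  have hswap : ∀ Y : A, Y * (4 * (q * q - q)) = (4 * (q * q - q)) * Y →
      (1 + 4 * (q * q - q)) * (Y * Y) = Y * Y * (1 + 4 * (q * q - q)) := by
    intro Y hY
    have h1 : (1 + 4 * (q * q - q)) * Y = Y * (1 + 4 * (q * q - q)) := by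
      rw [add_mul, mul_add, one_mul, mul_one, hY]
    calc (1 + 4 * (q * q - q)) * (Y * Y) = ((1 + 4 * (q * q - q)) * Y) * Y :=
          (mul_assoc _ _ _).symm
      _ = (Y * (1 + 4 * (q * q - q))) * Y := by rw [h1]
      _ = Y * ((1 + 4 * (q * q - q)) * Y) := mul_assoc _ _ _
      _ = Y * (Y * (1 + 4 * (q * q - q))) := by rw [h1]
      _ = Y * Y * (1 + 4 * (q * q - q)) := (mul_assoc _ _ _).symm
  -- x is divisible by t
  have hx : (4 : A) * (q * q - q) = t * (4 * b₀) := by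
    rw [hb₀, ← mul_assoc, ← hcentral 4, mul_assoc]
  -- error terms
  have heM : ∀ n : ℕ, ∃ b, FedoAux.eI q n = t ^ (n + 1) * b := by
    intro n
    induction n with
    | zero => exact ⟨4 * b₀, by rw [FedoAux.eI_zero, hx, pow_one]⟩
    | succ k ih =>
      rw [FedoAux.eI_succ, pow_two]
      exact Mmono (k + 1 + 1) ((k + 1) + (k + 1)) (by omega) _
        (Mml _ _ _ (Mmr _ _ _ (Mmul _ _ _ _ ih ih)))
  have hdM : ∀ n : ℕ, ∃ b, FedoAux.sig q (n + 1) - FedoAux.sig q n = t ^ (n + 1) * b := by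
    intro n
    rw [FedoAux.sig_diff]
    exact Mneg _ _ (Mml _ _ _ (Mml _ _ _ (heM n)))
  obtain ⟨S, hS⟩ := hcomplete (FedoAux.sig q)
    (fun n => Mmono n (n + 1) (Nat.le_succ n) _ (hdM n))
  -- S ≡ 1 mod t
  have hS1 : ∃ b, S - 1 = t * b := by
    have h1 := hS 1
    have h2 := hdM 0
    rw [FedoAux.sig_zero] at h2
    have h3 : S - 1 = (S - FedoAux.sig q 1) + (FedoAux.sig q 1 - 1) := by abel
    rw [h3]
    have := Madd 1 _ _ h1 h2
    simpa [pow_one] using this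
  -- S commutes with anything the sig's commute with
  have hScomm : ∀ z : A, (∀ n, FedoAux.sig q n * z = z * FedoAux.sig q n) → S * z = z * S := by
    intro z hz
    have h0 : S * z - z * S = 0 := by
      apply hsep
      intro n
      obtain ⟨b, hb⟩ := hS n
      have hid : S * z - z * S = ((S - FedoAux.sig q n) * z - z * (S - FedoAux.sig q n))
          + (FedoAux.sig q n * z - z * FedoAux.sig q n) := by noncomm_ring
      rw [hz n, sub_self, add_zero] at hid
      rw [hid]
      exact Msub n _ _ (Mmr _ _ _ ⟨b, hb⟩) (Mml _ _ _ ⟨b, hb⟩)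
    exact sub_eq_zero.mp h0
  have hSq : S * q = q * S := hScomm q (FedoAux.sig_comm_q q)
  have hSx : S * (4 * (q * q - q)) = (4 * (q * q - q)) * S := hScomm _ (FedoAux.sig_comm_x q)
  have hS2 : S * S * (1 + 4 * (q * q - q)) = 1 := by
    have h0 : S * S * (1 + 4 * (q * q - q)) - 1 = 0 := by
      apply hsep
      intro n
      obtain ⟨b, hb⟩ := hS n
      have hid : S * S * (1 + 4 * (q * q - q)) - 1 =
          (FedoAux.sig q n * FedoAux.sig q n * (1 + 4 * (q * q - q)) - 1)
          + (FedoAux.sig q n * (S - FedoAux.sig q n) + (S - FedoAux.sig q n) * FedoAux.sig q n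
             + (S - FedoAux.sig q n) * (S - FedoAux.sig q n)) * (1 + 4 * (q * q - q)) := by
        noncomm_ring
      rw [hid, ← FedoAux.eI_spec]
      refine Madd n _ _ (Mmono n (n + 1) (Nat.le_succ n) _ (heM n)) (Mmr _ _ _ ?_)
      exact Madd n _ _ (Madd n _ _ (Mml _ _ _ ⟨b, hb⟩) (Mmr _ _ _ ⟨b, hb⟩)) (Mmr _ _ _ ⟨b, hb⟩)
    exact sub_eq_zero.mp h0
  have hprops : (∃ b, S - 1 = t * b) ∧ S * (4 * (q * q - q)) = (4 * (q * q - q)) * S ∧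
      S * S * (1 + 4 * (q * q - q)) = 1 := ⟨hS1, hSx, hS2⟩
  have hhalf : ∀ a : A, algebraMap ℚ A (1/2) * (a + a) = a := by
    intro a
    rw [mul_add, ← add_mul, ← map_add]
    norm_num
  -- uniqueness
  have huniq : ∀ S₁ S₂ : A,
      ((∃ b, S₁ - 1 = t * b) ∧ S₁ * (4 * (q * q - q)) = (4 * (q * q - q)) * S₁ ∧
        S₁ * S₁ * (1 + 4 * (q * q - q)) = 1) →
      ((∃ b, S₂ - 1 = t * b) ∧ S₂ * (4 * (q * q - q)) = (4 * (q * q - q)) * S₂ ∧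
        S₂ * S₂ * (1 + 4 * (q * q - q)) = 1) → S₁ = S₂ := by
    rintro S₁ S₂ ⟨⟨u₁, hu₁⟩, hx₁, h2₁⟩ ⟨⟨u₂, hu₂⟩, hx₂, h2₂⟩
    have hinv₁ : (1 + 4 * (q * q - q)) * (S₁ * S₁) = 1 := by
      rw [hswap S₁ hx₁]; exact h2₁
    have hsq : S₁ * S₁ = S₂ * S₂ := by
      calc S₁ * S₁ = (S₂ * S₂ * (1 + 4 * (q * q - q))) * (S₁ * S₁) := by rw [h2₂, one_mul]
        _ = S₂ * S₂ * ((1 + 4 * (q * q - q)) * (S₁ * S₁)) := by rw [mul_assoc]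
        _ = S₂ * S₂ := by rw [hinv₁, mul_one]
    have hD0 : S₁ * (S₁ - S₂) + (S₁ - S₂) * S₂ = 0 := by
      have h : S₁ * (S₁ - S₂) + (S₁ - S₂) * S₂ = S₁ * S₁ - S₂ * S₂ := by noncomm_ring
      rw [h, hsq, sub_self]
    have hstep : ∀ n : ℕ, (∃ b, S₁ - S₂ = t ^ n * b) → ∃ b, S₁ - S₂ = t ^ (n + 1) * b := by
      rintro n ⟨b, hb⟩
      have hid : (S₁ - S₂) + (S₁ - S₂) + ((S₁ - 1) * (S₁ - S₂) + (S₁ - S₂) * (S₂ - 1))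
          = S₁ * (S₁ - S₂) + (S₁ - S₂) * S₂ := by noncomm_ring
      rw [hu₁, hu₂, hD0] at hid
      have hexp : (S₁ - S₂) + (S₁ - S₂) = -((t * u₁) * (S₁ - S₂) + (S₁ - S₂) * (t * u₂)) :=
        eq_neg_of_add_eq_zero_left hid
      have hW : ∃ w, (t * u₁) * (S₁ - S₂) + (S₁ - S₂) * (t * u₂) = t ^ (n + 1) * w := by
        refine Madd (n + 1) _ _ ?_ ?_
        · have := Mmul 1 n (t * u₁) (S₁ - S₂) ⟨u₁, by rw [pow_one]⟩ ⟨b, hb⟩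
          exact Mmono (n + 1) (1 + n) (by omega) _ this
        · exact Mmul n 1 _ _ ⟨b, hb⟩ ⟨u₂, by rw [pow_one]⟩
      obtain ⟨w, hw⟩ := hW
      refine ⟨algebraMap ℚ A (1/2) * (-w), ?_⟩
      have h2 : S₁ - S₂ = algebraMap ℚ A (1/2) * ((S₁ - S₂) + (S₁ - S₂)) := (hhalf _).symm
      rw [h2, hexp, hw, ← mul_neg, ← mul_assoc, Algebra.commutes, mul_assoc]
    have hDn : ∀ n : ℕ, ∃ b, S₁ - S₂ = t ^ n * b := by
      intro n
      induction n with
      | zero => exact ⟨S₁ - S₂, by rw [pow_zero, one_mul]⟩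
      | succ k ih => exact hstep k ih
    exact sub_eq_zero.mp (hsep _ hDn)
  refine ⟨⟨S, hprops, fun y hy => huniq y S hy hprops⟩, ?_⟩
  -- part 2
  intro S' hS'
  have hS'S : S' = S := huniq S' S hS' hprops
  subst hS'S
  obtain ⟨u, hu⟩ := hS1
  set c := algebraMap ℚ A (1/2) with hc
  have hcA : ∀ a : A, c * a = a * c := fun a => Algebra.commutes _ _
  have hcc : c + c = 1 := by rw [hc, ← map_add]; norm_num
  have hc4 : c * c = algebraMap ℚ A (1/4) := by rw [hc, ← map_mul]; norm_num
  have h441 : algebraMap ℚ A (1/4) * (4 : A) = 1 := by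
    rw [show (4 : A) = algebraMap ℚ A 4 from (map_ofNat _ 4).symm, ← map_mul]
    norm_num
  have hinvS : (1 + 4 * (q * q - q)) * (S' * S') = 1 := by
    rw [hswap S' hSx]; exact hS2
  have hpS : (q - c) * S' = S' * (q - c) := by
    rw [sub_mul, mul_sub, ← hSq, hcA S']
  have hpp : (q - c) * (q - c) = algebraMap ℚ A (1/4) * (1 + 4 * (q * q - q)) := by
    have h1 : (q - c) * (q - c) = q * q - (q * c + c * q) + c * c := by noncomm_ring
    rw [h1, ← hcA q, ← add_mul, hcc, one_mul, hc4, mul_add, mul_one, ← mul_assoc, h441, one_mul]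
    abel
  have he1 : ((q - c) * S') * ((q - c) * S') = algebraMap ℚ A (1/4) := by
    calc ((q - c) * S') * ((q - c) * S') = (q - c) * ((S' * (q - c)) * S') := by noncomm_ring
      _ = (q - c) * (((q - c) * S') * S') := by rw [← hpS]
      _ = ((q - c) * (q - c)) * (S' * S') := by noncomm_ring
      _ = algebraMap ℚ A (1/4) * ((1 + 4 * (q * q - q)) * (S' * S')) := by rw [hpp, mul_assoc]
      _ = algebraMap ℚ A (1/4) := by rw [hinvS, mul_one]
  refine ⟨?_, ?_, ?_⟩
  · calc (c + (q - c) * S') * (c + (q - c) * S')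
        = c * c + (c * ((q - c) * S') + ((q - c) * S') * c) + ((q - c) * S') * ((q - c) * S') := by
          noncomm_ring
      _ = algebraMap ℚ A (1/4) + (c + c) * ((q - c) * S') + algebraMap ℚ A (1/4) := by
          rw [hc4, he1, ← hcA ((q - c) * S'), ← add_mul]
      _ = c + (q - c) * S' := by
          rw [hcc, one_mul,
            show algebraMap ℚ A (1/4) + (q - c) * S' + algebraMap ℚ A (1/4)
              = (algebraMap ℚ A (1/4) + algebraMap ℚ A (1/4)) + (q - c) * S' from by abel,
            ← map_add]
          norm_num
          exact hc.symm
  · refine ⟨(q - c) * u, ?_⟩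
    have hid : c + (q - c) * S' - q = (q - c) * (S' - 1) := by noncomm_ring
    rw [hid, hu, ← mul_assoc, ← hcentral (q - c), mul_assoc]
  · have hpq : (q - c) * q = q * (q - c) := by rw [sub_mul, mul_sub, hcA q]
    calc (c + (q - c) * S') * q = c * q + (q - c) * (S' * q) := by noncomm_ring
      _ = q * c + (q - c) * (q * S') := by rw [hcA q, hSq]
      _ = q * c + ((q - c) * q) * S' := by rw [mul_assoc]
      _ = q * c + (q * (q - c)) * S' := by rw [hpq]
      _ = q * (c + (q - c) * S') := by noncomm_ring
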